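/- Σ_{k≥0} (k + 1 - (3/2)⌊k/3⌋)(⌊k/3⌋ + 1) / ((k+1)(k+2)(k+3)(k+4)) = π/(18√3). -/

import Mathlib

open Real intervalIntegral

lemma sqrt3_pos : (0:ℝ) < Real.sqrt 3 := Real.sqrt_pos.mpr (by norm_num)

lemma quad_pos (x : ℝ) : (0:ℝ) < 1 + x + x^2 := by nlinarith [sq_nonneg (x+1), sq_nonneg x]

lemma hasDeriv_F (x : ℝ) :
    HasDerivAt (fun y : ℝ => 2 / Real.sqrt 3 * Real.arctan ((2*y+1)/Real.sqrt 3))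
      (1 / (1 + x + x^2)) x := by
  have h3 : Real.sqrt 3 ^ 2 = 3 := Real.sq_sqrt (by norm_num)
  have hs := sqrt3_pos
  have h1 : HasDerivAt (fun y : ℝ => (2*y+1)/Real.sqrt 3) (2/Real.sqrt 3) x := by
    simpa using (((hasDerivAt_id x).const_mul 2).add_const 1).div_const (Real.sqrt 3)
  have h2 := (Real.hasDerivAt_arctan ((2*x+1)/Real.sqrt 3)).comp x h1
  have h4 := h2.const_mul (2/Real.sqrt 3)
  refine HasDerivAt.congr_deriv h4 ?_
  symm
  have hq := (quad_pos x).ne'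
  rw [div_pow, h3]
  have hd : 1 + (2 * x + 1) ^ 2 / 3 = 4 * (1 + x + x ^ 2) / 3 := by ring
  rw [hd]
  rw [div_eq_iff hq]
  field_simp
  nlinarith [h3]

lemma integral_quad : ∫ x in (0:ℝ)..1, 1 / (1 + x + x^2) = π / (3 * Real.sqrt 3) := by
  have hs := sqrt3_pos
  have h3 : Real.sqrt 3 * Real.sqrt 3 = 3 := Real.mul_self_sqrt (by norm_num)
  have hcont : Continuous fun x : ℝ => 1 / (1 + x + x^2) :=
    continuous_const.div (by continuity) (fun x => (quad_pos x).ne')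
  have := intervalIntegral.integral_eq_sub_of_hasDerivAt
    (f := fun y : ℝ => 2 / Real.sqrt 3 * Real.arctan ((2*y+1)/Real.sqrt 3))
    (fun x _ => hasDeriv_F x) (hcont.intervalIntegrable 0 1)
  rw [this]
  have e1 : (2*(1:ℝ)+1)/Real.sqrt 3 = Real.sqrt 3 := by
    rw [div_eq_iff hs.ne']; linarith
  have e2 : (2*(0:ℝ)+1)/Real.sqrt 3 = (Real.sqrt 3)⁻¹ := by
    rw [div_eq_inv_mul]; ring
  have a1 : Real.arctan (Real.sqrt 3) = π / 3 := by
    rw [← Real.tan_pi_div_three, Real.arctan_tan] <;> linarith [Real.pi_pos]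
  have a2 : Real.arctan (Real.sqrt 3)⁻¹ = π / 6 := by
    rw [Real.arctan_inv_of_pos hs, a1]; ring
  simp only [e1, e2, a1, a2]
  field_simp
  ring

open Filter Topology

lemma poly_id (N : ℕ) (x : ℝ) :
    ∑ m ∈ Finset.range N, (x^(3*m) - x^(3*m+1)) = (1 - x^(3*N)) / (1 + x + x^2) := by
  rw [eq_div_iff (quad_pos x).ne']
  induction N with
  | zero => simp
  | succ n ih =>
    rw [Finset.sum_range_succ, add_mul, ih]
    ring

lemma term_integral (m : ℕ) :
    (1:ℝ)/(3*m+1) - 1/(3*m+2) = ∫ x in (0:ℝ)..1, (x^(3*m) - x^(3*m+1)) := by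
  rw [intervalIntegral.integral_sub ((continuous_pow _).intervalIntegrable 0 1)
      ((continuous_pow _).intervalIntegrable 0 1), integral_pow, integral_pow]
  push_cast
  norm_num
  ring

lemma tail_bound (N : ℕ) :
    ∫ x in (0:ℝ)..1, x^(3*N) / (1 + x + x^2) ∈ Set.Icc (0:ℝ) (1/(3*N+1)) := by
  have hcont : Continuous fun x : ℝ => x^(3*N) / (1 + x + x^2) :=
    (continuous_pow _).div (by continuity) (fun x => (quad_pos x).ne')
  constructor
  · apply intervalIntegral.integral_nonneg (by norm_num)
    intro x hx
    have h := quad_pos x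
    have := pow_nonneg hx.1 (3*N)
    positivity
  · have h1 : ∫ x in (0:ℝ)..1, x^(3*N) / (1 + x + x^2) ≤ ∫ x in (0:ℝ)..1, x^(3*N) := by
      apply intervalIntegral.integral_mono_on (by norm_num)
        (hcont.intervalIntegrable 0 1) ((continuous_pow _).intervalIntegrable 0 1)
      intro x hx
      rw [div_le_iff₀ (quad_pos x)]
      nlinarith [pow_nonneg hx.1 (3*N), hx.1, sq_nonneg x]
    have h2 : ∫ x in (0:ℝ)..1, x^(3*N) = 1/(3*N+1) := by
      rw [integral_pow]; push_cast; norm_num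
    linarith

lemma Lseries :
    Tendsto (fun N : ℕ => ∑ m ∈ Finset.range N, ((1:ℝ)/(3*m+1) - 1/(3*m+2)))
      atTop (𝓝 (π / (3 * Real.sqrt 3))) := by
  have key : ∀ N : ℕ, ∑ m ∈ Finset.range N, ((1:ℝ)/(3*m+1) - 1/(3*m+2)) =
      π / (3 * Real.sqrt 3) - ∫ x in (0:ℝ)..1, x^(3*N) / (1 + x + x^2) := by
    intro N
    have hcontq : Continuous fun x : ℝ => 1 / (1 + x + x^2) :=
      continuous_const.div (by continuity) (fun x => (quad_pos x).ne')
    have hcontN : Continuous fun x : ℝ => x^(3*N) / (1 + x + x^2) :=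
      (continuous_pow _).div (by continuity) (fun x => (quad_pos x).ne')
    calc ∑ m ∈ Finset.range N, ((1:ℝ)/(3*m+1) - 1/(3*m+2))
        = ∑ m ∈ Finset.range N, ∫ x in (0:ℝ)..1, (x^(3*m) - x^(3*m+1)) := by
          simp only [term_integral]
      _ = ∫ x in (0:ℝ)..1, ∑ m ∈ Finset.range N, (x^(3*m) - x^(3*m+1)) := by
          rw [intervalIntegral.integral_finset_sum]
          intro m _
          exact (((continuous_pow _).sub (continuous_pow _)).intervalIntegrable 0 1)
      _ = ∫ x in (0:ℝ)..1, (1 / (1 + x + x^2) - x^(3*N) / (1 + x + x^2)) := by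
          apply intervalIntegral.integral_congr
          intro x hx
          simp only
          rw [poly_id, sub_div]
      _ = (∫ x in (0:ℝ)..1, 1 / (1 + x + x^2)) - ∫ x in (0:ℝ)..1, x^(3*N) / (1 + x + x^2) := by
          exact intervalIntegral.integral_sub (hcontq.intervalIntegrable 0 1)
            (hcontN.intervalIntegrable 0 1)
      _ = π / (3 * Real.sqrt 3) - ∫ x in (0:ℝ)..1, x^(3*N) / (1 + x + x^2) := by
          rw [integral_quad]
  simp only [key]
  have htail : Tendsto (fun N : ℕ => ∫ x in (0:ℝ)..1, x^(3*N) / (1 + x + x^2)) atTop (𝓝 0) := by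
    apply squeeze_zero (fun N => (tail_bound N).1) (fun N => (tail_bound N).2)
    have : Tendsto (fun N : ℕ => 3 * (N:ℝ) + 1) atTop atTop := by
      apply tendsto_atTop_add_const_right
      exact (tendsto_natCast_atTop_atTop).const_mul_atTop (by norm_num)
    simpa [one_div, Pi.inv_def] using this.inv_tendsto_atTop
  simpa using (tendsto_const_nhds.sub htail)

noncomputable def f (k : ℕ) : ℝ :=
  (((k : ℝ) + 1 - 3 / 2 * ((k / 3 : ℕ) : ℝ)) * (((k / 3 : ℕ) : ℝ) + 1)) /
    (((k : ℝ) + 1) * ((k : ℝ) + 2) * ((k : ℝ) + 3) * ((k : ℝ) + 4))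

lemma f_le (k : ℕ) : f k ≤ 1 / ((k:ℝ)+1)^2 := by
  unfold f
  have hm : 3 * (((k/3:ℕ)):ℝ) ≤ (k:ℝ) := by exact_mod_cast Nat.mul_div_le k 3
  have hm0 : (0:ℝ) ≤ ((k/3:ℕ):ℝ) := Nat.cast_nonneg _
  have hk : (0:ℝ) ≤ (k:ℝ) := Nat.cast_nonneg _
  rw [div_le_div_iff₀ (by positivity) (by positivity)]
  set m := ((k/3:ℕ):ℝ)
  set x := (k:ℝ)
  nlinarith [mul_nonneg hm0 hk, sq_nonneg (x - 3*m), mul_nonneg (mul_nonneg hm0 hm0) hk,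
    mul_nonneg hm0 (mul_nonneg hk hk), sq_nonneg x, sq_nonneg (x+1),
    mul_nonneg (sub_nonneg.mpr hm) (mul_nonneg hk hk), mul_nonneg (sub_nonneg.mpr hm) hk,
    mul_nonneg (sub_nonneg.mpr hm) hm0, mul_nonneg (mul_nonneg (sub_nonneg.mpr hm) hk) hk]

lemma f_nonneg (k : ℕ) : 0 ≤ f k := by
  unfold f
  have hm : 3 * (((k/3:ℕ)):ℝ) ≤ (k:ℝ) := by exact_mod_cast Nat.mul_div_le k 3
  have hm0 : (0:ℝ) ≤ ((k/3:ℕ):ℝ) := Nat.cast_nonneg _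
  have hk : (0:ℝ) ≤ (k:ℝ) := Nat.cast_nonneg _
  apply div_nonneg
  · nlinarith
  · positivity

lemma f_summable : Summable f := by
  apply Summable.of_nonneg_of_le f_nonneg f_le
  have h : Summable fun n : ℕ => 1 / ((n:ℝ))^2 := by
    simpa using Real.summable_one_div_nat_pow.mpr (by norm_num : 1 < 2)
  have := (summable_nat_add_iff 1).mpr h
  apply this.congr
  intro n
  push_cast
  ring

lemma partial_sum (N : ℕ) :
    ∑ k ∈ Finset.range (3*N), f k =
      (1/6) * (∑ m ∈ Finset.range N, ((1:ℝ)/(3*m+1) - 1/(3*m+2)))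
        + 1/(9*(3*(N:ℝ)+1)) - 2/(9*(3*(N:ℝ)+2)) := by
  induction N with
  | zero => norm_num [f]
  | succ n ih =>
    have e : 3*(n+1) = (3*n) + 1 + 1 + 1 := by ring
    rw [e, Finset.sum_range_succ, Finset.sum_range_succ, Finset.sum_range_succ, ih,
      Finset.sum_range_succ]
    have d0 : (3*n) / 3 = n := by omega
    have d1 : (3*n+1) / 3 = n := by omega
    have d2 : (3*n+1+1) / 3 = n := by omega
    unfold f
    rw [d0, d1, d2]
    push_cast
    have h1 : (0:ℝ) < 3*(n:ℝ)+1 := by positivity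
    have h2 : (0:ℝ) < 3*(n:ℝ)+2 := by positivity
    have h3 : (0:ℝ) < 3*(n:ℝ)+3 := by positivity
    have h4 : (0:ℝ) < 3*(n:ℝ)+4 := by positivity
    have h5 : (0:ℝ) < 3*(n:ℝ)+5 := by positivity
    have h6 : (0:ℝ) < 3*(n:ℝ)+6 := by positivity
    field_simp
    ring

theorem series_p3 :
    (∑' k : ℕ,
        (((k : ℝ) + 1 - 3 / 2 * ((k / 3 : ℕ) : ℝ)) * (((k / 3 : ℕ) : ℝ) + 1)) /
          (((k : ℝ) + 1) * ((k : ℝ) + 2) * ((k : ℝ) + 3) * ((k : ℝ) + 4)))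
      = π / (18 * Real.sqrt 3) := by
  have hsum : Summable f := f_summable
  have h1 : Tendsto (fun n : ℕ => ∑ k ∈ Finset.range n, f k) atTop (𝓝 (∑' k, f k)) :=
    hsum.hasSum.tendsto_sum_nat
  have h3 : Tendsto (fun N : ℕ => 3*N) atTop atTop :=
    tendsto_atTop_atTop_of_monotone (fun a b h => by omega) (fun b => ⟨b, by omega⟩)
  have h2 : Tendsto (fun N : ℕ => ∑ k ∈ Finset.range (3*N), f k) atTop (𝓝 (∑' k, f k)) :=
    h1.comp h3
  have hzero1 : Tendsto (fun N : ℕ => 1/(9*(3*(N:ℝ)+1))) atTop (𝓝 0) := by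
    have : Tendsto (fun N : ℕ => 9*(3*(N:ℝ)+1)) atTop atTop := by
      apply Tendsto.const_mul_atTop (by norm_num)
      apply tendsto_atTop_add_const_right
      exact (tendsto_natCast_atTop_atTop).const_mul_atTop (by norm_num)
    simpa only [one_div, Pi.inv_def] using this.inv_tendsto_atTop
  have hzero2 : Tendsto (fun N : ℕ => 2/(9*(3*(N:ℝ)+2))) atTop (𝓝 0) := by
    have h : Tendsto (fun N : ℕ => 9*(3*(N:ℝ)+2)) atTop atTop := by
      apply Tendsto.const_mul_atTop (by norm_num)
      apply tendsto_atTop_add_const_right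
      exact (tendsto_natCast_atTop_atTop).const_mul_atTop (by norm_num)
    have := h.inv_tendsto_atTop.const_mul (2:ℝ)
    simpa only [div_eq_mul_inv, mul_zero, Pi.inv_apply] using this
  have h4 : Tendsto (fun N : ℕ => ∑ k ∈ Finset.range (3*N), f k) atTop
      (𝓝 ((1/6) * (π / (3 * Real.sqrt 3)) + 0 - 0)) := by
    simp only [partial_sum]
    exact ((Lseries.const_mul (1/6 : ℝ)).add hzero1).sub hzero2
  have hval : (1/6 : ℝ) * (π / (3 * Real.sqrt 3)) + 0 - 0 = π / (18 * Real.sqrt 3) := by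
    rw [add_zero, sub_zero, one_div, inv_mul_eq_div, div_div, div_eq_div_iff (by positivity) (by positivity)]
    ring
  have : (∑' k, f k) = π / (18 * Real.sqrt 3) := by
    rw [← hval]
    exact tendsto_nhds_unique h2 h4
  exact this
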